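/- arXiv:1603.00494 — 3 statements merged into one kernel-verified Lean document; each statement's English description precedes it below -/
import Mathlib

section
/- Let 𝔞ₙ be an increasing sequence of nonnegative, closed, densely defined symmetric forms on a Hilbert space H (i.e., D(𝔞ₙ₊₁) ⊆ D(𝔞ₙ) and 𝔞ₙ[u] ≤ 𝔞ₙ₊₁[u] for u ∈ D(𝔞ₙ₊₁)). Define 𝔞[u] := lim_{n→∞} 𝔞ₙ[u] on D(𝔞) := {u ∈ ⋂ₙ D(𝔞ₙ) : supₙ 𝔞ₙ[u] < ∞}. Then 𝔞 is a nonnegative closed symmetric form, and for every λ < 0 and u ∈ H, (λ − 𝔞ₙ)⁻¹u converges to (λ − 𝔞)⁻¹u, where the pseudoresolvents are defined via the associated self-adjoint operators on the closure of the form domains, extended by 0 on the orthogonal complement. -/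
open Filter


namespace SimonAux

variable {H : Type*} [NormedAddCommGroup H] [InnerProductSpace ℂ H]

variable (b : H → H → ℂ)

lemma form_add₂ (hadd : ∀ u v w, b (u + v) w = b u w + b v w)
    (hsym : ∀ u v, b u v = (starRingEnd ℂ) (b v u)) (u v w : H) :
    b u (v + w) = b u v + b u w := by
  rw [hsym, hadd, map_add, ← hsym, ← hsym]

lemma form_smul₂ (hsmul : ∀ (c : ℂ) u v, b (c • u) v = c * b u v)
    (hsym : ∀ u v, b u v = (starRingEnd ℂ) (b v u)) (c : ℂ) (u v : H) :
    b u (c • v) = (starRingEnd ℂ) c * b u v := by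
  rw [hsym, hsmul, map_mul, ← hsym]

lemma form_sub₁ (hadd : ∀ u v w, b (u + v) w = b u w + b v w)
    (hsmul : ∀ (c : ℂ) u v, b (c • u) v = c * b u v) (u v w : H) :
    b (u - v) w = b u w - b v w := by
  have h : u - v = u + (-1 : ℂ) • v := by
    simp [sub_eq_add_neg]
  rw [h, hadd, hsmul]; ring

lemma form_sub₂ (hadd : ∀ u v w, b (u + v) w = b u w + b v w)
    (hsmul : ∀ (c : ℂ) u v, b (c • u) v = c * b u v)
    (hsym : ∀ u v, b u v = (starRingEnd ℂ) (b v u)) (u v w : H) :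
    b u (v - w) = b u v - b u w := by
  rw [hsym, form_sub₁ b hadd hsmul, map_sub, ← hsym, ← hsym]

lemma form_re_symm (hsym : ∀ u v, b u v = (starRingEnd ℂ) (b v u)) (u v : H) :
    (b u v).re = (b v u).re := by
  rw [hsym]; exact Complex.conj_re _

lemma form_expand_sub (hadd : ∀ u v w, b (u + v) w = b u w + b v w)
    (hsmul : ∀ (c : ℂ) u v, b (c • u) v = c * b u v)
    (hsym : ∀ u v, b u v = (starRingEnd ℂ) (b v u)) (x y : H) :
    (b (x - y) (x - y)).re
      = (b x x).re - 2 * (b x y).re + (b y y).re := by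
  rw [form_sub₁ b hadd hsmul, form_sub₂ b hadd hsmul hsym, form_sub₂ b hadd hsmul hsym,
    Complex.sub_re, Complex.sub_re, Complex.sub_re, form_re_symm b hsym y x]
  ring

lemma form_expand_add (hadd : ∀ u v w, b (u + v) w = b u w + b v w)
    (hsym : ∀ u v, b u v = (starRingEnd ℂ) (b v u)) (x y : H) :
    (b (x + y) (x + y)).re
      = (b x x).re + 2 * (b x y).re + (b y y).re := by
  rw [hadd, form_add₂ b hadd hsym, form_add₂ b hadd hsym,
    Complex.add_re, Complex.add_re, Complex.add_re, form_re_symm b hsym y x]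
  ring

lemma form_neg_diag (hadd : ∀ u v w, b (u + v) w = b u w + b v w)
    (hsmul : ∀ (c : ℂ) u v, b (c • u) v = c * b u v)
    (hsym : ∀ u v, b u v = (starRingEnd ℂ) (b v u)) (x y : H) :
    b (x - y) (x - y) = b (y - x) (y - x) := by
  have h : y - x = (-1 : ℂ) • (x - y) := by simp
  rw [h, hsmul, form_smul₂ b hsmul hsym]
  simp

/-- Cauchy-Schwarz for a nonnegative hermitian sesquilinear form. -/
lemma form_cs (hadd : ∀ u v w, b (u + v) w = b u w + b v w)
    (hsmul : ∀ (c : ℂ) u v, b (c • u) v = c * b u v)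
    (hsym : ∀ u v, b u v = (starRingEnd ℂ) (b v u)) (x y : H)
    (hx : 0 ≤ (b x x).re) (hy : 0 ≤ (b y y).re)
    (hpos : ∀ t : ℂ, 0 ≤ (b (x + t • y) (x + t • y)).re) :
    ‖b x y‖ ^ 2 ≤ (b x x).re * (b y y).re := by
  have expand : ∀ t : ℂ, (b (x + t • y) (x + t • y)).re
      = (b x x).re + 2 * ((starRingEnd ℂ) t * b x y).re
        + Complex.normSq t * (b y y).re := by
    intro t
    have h1 : b (x + t • y) (x + t • y)
        = b x x + (starRingEnd ℂ) t * b x y + t * (starRingEnd ℂ) (b x y)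
          + (t * (starRingEnd ℂ) t) * b y y := by
      rw [hadd, form_add₂ b hadd hsym, form_add₂ b hadd hsym,
        form_smul₂ b hsmul hsym, hsmul, hsmul, form_smul₂ b hsmul hsym, hsym y x]
      ring
    have h2 : t * (starRingEnd ℂ) t = (Complex.normSq t : ℂ) := Complex.mul_conj t
    rw [h1, h2]
    have h3 : (t * (starRingEnd ℂ) (b x y)).re = ((starRingEnd ℂ) t * b x y).re := by
      rw [show t * (starRingEnd ℂ) (b x y) = (starRingEnd ℂ) ((starRingEnd ℂ) t * b x y) by
        rw [map_mul]; simp]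
      exact Complex.conj_re _
    simp only [Complex.add_re, h3, Complex.re_ofReal_mul]
    ring
  set α := b x y with hα
  by_cases h0 : α = 0
  · rw [h0]; simp; positivity
  · -- use t = -(s : ℂ) * α
    have key : ∀ s : ℝ, 0 ≤ (Complex.normSq α * (b y y).re) * (s * s)
        + (-2 * Complex.normSq α) * s + (b x x).re := by
      intro s
      have := hpos (-(s : ℂ) * α)
      rw [expand] at this
      have hconj : (starRingEnd ℂ) α * α = (Complex.normSq α : ℂ) := by
        rw [mul_comm, Complex.mul_conj]
      have e1 : ((starRingEnd ℂ) (-(s : ℂ) * α) * α) = ((-s * Complex.normSq α : ℝ) : ℂ) := by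
        rw [map_mul, map_neg, Complex.conj_ofReal]
        push_cast
        linear_combination (-(s : ℂ)) * hconj
      have e2 : Complex.normSq (-(s : ℂ) * α) = s ^ 2 * Complex.normSq α := by
        rw [show -(s : ℂ) * α = ((-s : ℝ) : ℂ) * α by push_cast; ring,
          Complex.normSq_mul, Complex.normSq_ofReal]
        ring
      rw [e1, e2] at this
      simp only [Complex.ofReal_re] at this
      nlinarith [this]
    have hd := discrim_le_zero key
    have hN : 0 < Complex.normSq α := by
      simpa [Complex.normSq_pos] using h0
    rw [discrim] at hd
    have : ‖α‖ ^ 2 = Complex.normSq α := Complex.sq_norm α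
    nlinarith [hd, hN, this]

/-- triangle inequality for the seminorm sqrt of the diagonal. -/
lemma form_triangle (hadd : ∀ u v w, b (u + v) w = b u w + b v w)
    (hsmul : ∀ (c : ℂ) u v, b (c • u) v = c * b u v)
    (hsym : ∀ u v, b u v = (starRingEnd ℂ) (b v u)) (x y : H)
    (hx : 0 ≤ (b x x).re) (hy : 0 ≤ (b y y).re)
    (hpos : ∀ t : ℂ, 0 ≤ (b (x + t • y) (x + t • y)).re) :
    Real.sqrt ((b (x + y) (x + y)).re)
      ≤ Real.sqrt ((b x x).re) + Real.sqrt ((b y y).re) := by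
  have hcs := form_cs b hadd hsmul hsym x y hx hy hpos
  have habs : (b x y).re ≤ Real.sqrt ((b x x).re) * Real.sqrt ((b y y).re) := by
    have h1 : (b x y).re ≤ ‖b x y‖ := Complex.re_le_norm _
    have h2 : ‖b x y‖ ≤ Real.sqrt ((b x x).re * (b y y).re) := by
      rw [show ‖b x y‖ = Real.sqrt (‖b x y‖ ^ 2) by
        rw [Real.sqrt_sq (norm_nonneg _)]]
      exact Real.sqrt_le_sqrt hcs
    rw [Real.sqrt_mul hx] at h2
    linarith
  have hexp := form_expand_add b hadd hsym x y
  have : (b (x + y) (x + y)).re ≤ (Real.sqrt ((b x x).re) + Real.sqrt ((b y y).re)) ^ 2 := by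
    rw [hexp]
    have sx := Real.sq_sqrt hx
    have sy := Real.sq_sqrt hy
    nlinarith [habs]
  calc Real.sqrt ((b (x + y) (x + y)).re)
      ≤ Real.sqrt ((Real.sqrt ((b x x).re) + Real.sqrt ((b y y).re)) ^ 2) :=
        Real.sqrt_le_sqrt this
    _ = _ := Real.sqrt_sq (by positivity)

end SimonAux


set_option maxHeartbeats 2000000 in
open SimonAux in
/-- Simon's monotone convergence theorem for an increasing sequence of nonnegative, closed,
densely defined symmetric forms `aₙ`: the limit form `a` on
`D(a) = {u ∈ ⋂ D(aₙ) : sup aₙ[u] < ∞}` is a nonnegative closed symmetric form, and for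
`λ < 0` the pseudoresolvents `(λ − aₙ)⁻¹ u` (characterized variationally, which incorporates
the projection onto the closure of the form domain) converge to `(λ − a)⁻¹ u`. -/
theorem simon_monotone_convergence_of_forms
    {H : Type*} [NormedAddCommGroup H] [InnerProductSpace ℂ H] [CompleteSpace H]
    (D : ℕ → Submodule ℂ H) (a : ℕ → H → H → ℂ)
    (hadd₁ : ∀ n u v w, a n (u + v) w = a n u w + a n v w)
    (hsmul₁ : ∀ n (c : ℂ) u v, a n (c • u) v = c * a n u v)
    (hsymm : ∀ n u v, a n u v = (starRingEnd ℂ) (a n v u))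
    (hnonneg : ∀ n, ∀ u ∈ D n, 0 ≤ (a n u u).re)
    (hdense : ∀ n, Dense ((D n : Set H)))
    (hclosed : ∀ n, ∀ f : ℕ → H, (∀ m, f m ∈ D n) →
      (∀ ε : ℝ, 0 < ε → ∃ N : ℕ, ∀ k m, N ≤ k → N ≤ m →
        (a n (f k - f m) (f k - f m)).re + ‖f k - f m‖ ^ 2 < ε) →
      ∃ u ∈ D n, Tendsto (fun m => (a n (f m - u) (f m - u)).re + ‖f m - u‖ ^ 2)
        atTop (nhds 0))
    (hmonoD : ∀ n, D (n + 1) ≤ D n)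
    (hmono : ∀ n, ∀ u ∈ D (n + 1), (a n u u).re ≤ (a (n + 1) u u).re)
    (Dinf : Set H)
    (hDinf : Dinf = {u : H | (∀ n, u ∈ D n) ∧
      BddAbove (Set.range fun n => (a n u u).re)})
    (ainf : H → H → ℂ)
    (hainf : ∀ u ∈ Dinf, ∀ v ∈ Dinf,
      Tendsto (fun n => a n u v) atTop (nhds (ainf u v))) :
    -- the limit form is symmetric and nonnegative
    (∀ u ∈ Dinf, ∀ v ∈ Dinf, ainf u v = (starRingEnd ℂ) (ainf v u)) ∧
    (∀ u ∈ Dinf, 0 ≤ (ainf u u).re) ∧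
    -- the limit form is closed
    (∀ f : ℕ → H, (∀ m, f m ∈ Dinf) →
      (∀ ε : ℝ, 0 < ε → ∃ N : ℕ, ∀ k m, N ≤ k → N ≤ m →
        (ainf (f k - f m) (f k - f m)).re + ‖f k - f m‖ ^ 2 < ε) →
      ∃ u ∈ Dinf, Tendsto (fun m => (ainf (f m - u) (f m - u)).re + ‖f m - u‖ ^ 2)
        atTop (nhds 0)) ∧
    -- strong convergence of the pseudoresolvents for λ < 0
    (∀ lam : ℝ, lam < 0 → ∀ u : H, ∀ w : ℕ → H, ∀ winf : H,
      (∀ n, w n ∈ D n ∧ ∀ v ∈ D n,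
        (lam : ℂ) * (inner ℂ v (w n) : ℂ) - a n (w n) v = (inner ℂ v u : ℂ)) →
      (winf ∈ Dinf ∧ ∀ v ∈ Dinf,
        (lam : ℂ) * (inner ℂ v winf : ℂ) - ainf winf v = (inner ℂ v u : ℂ)) →
      Tendsto w atTop (nhds winf)) := by
  have hDmem : ∀ x : H, x ∈ Dinf ↔ (∀ n, x ∈ D n) ∧
      BddAbove (Set.range fun n => (a n x x).re) := by
    intro x; rw [hDinf]; exact Iff.rfl
  -- basic form lemmas, instantiated
  have sub₁ : ∀ n (u v w : H), a n (u - v) w = a n u w - a n v w :=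
    fun n => form_sub₁ (a n) (hadd₁ n) (hsmul₁ n)
  have negd : ∀ n (x y : H), a n (x - y) (x - y) = a n (y - x) (y - x) :=
    fun n => form_neg_diag (a n) (hadd₁ n) (hsmul₁ n) (hsymm n)
  have exps : ∀ n (x y : H), (a n (x - y) (x - y)).re
      = (a n x x).re - 2 * (a n x y).re + (a n y y).re :=
    fun n => form_expand_sub (a n) (hadd₁ n) (hsmul₁ n) (hsymm n)
  have expa : ∀ n (x y : H), (a n (x + y) (x + y)).re
      = (a n x x).re + 2 * (a n x y).re + (a n y y).re :=
    fun n => form_expand_add (a n) (hadd₁ n) (hsymm n)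
  have cs : ∀ n (x y : H), x ∈ D n → y ∈ D n →
      ‖a n x y‖ ^ 2 ≤ (a n x x).re * (a n y y).re := by
    intro n x y hx hy
    exact form_cs (a n) (hadd₁ n) (hsmul₁ n) (hsymm n) x y (hnonneg n x hx) (hnonneg n y hy)
      (fun t => hnonneg n _ (Submodule.add_mem _ hx (Submodule.smul_mem _ t hy)))
  have tri : ∀ n (x y : H), x ∈ D n → y ∈ D n →
      Real.sqrt ((a n (x + y) (x + y)).re)
        ≤ Real.sqrt ((a n x x).re) + Real.sqrt ((a n y y).re) := by
    intro n x y hx hy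
    exact form_triangle (a n) (hadd₁ n) (hsmul₁ n) (hsymm n) x y (hnonneg n x hx)
      (hnonneg n y hy)
      (fun t => hnonneg n _ (Submodule.add_mem _ hx (Submodule.smul_mem _ t hy)))
  have tri' : ∀ n (x y z : H), x ∈ D n → y ∈ D n → z ∈ D n →
      Real.sqrt ((a n (x - z) (x - z)).re)
        ≤ Real.sqrt ((a n (x - y) (x - y)).re) + Real.sqrt ((a n (y - z) (y - z)).re) := by
    intro n x y z hx hy hz
    have h : x - z = (x - y) + (y - z) := by abel
    rw [h]
    exact tri n _ _ (Submodule.sub_mem _ hx hy) (Submodule.sub_mem _ hy hz)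
  have chain : ∀ {n m : ℕ}, n ≤ m → ∀ x ∈ D m, x ∈ D n ∧ (a n x x).re ≤ (a m x x).re := by
    intro n m hnm
    induction hnm with
    | refl => exact fun x hx => ⟨hx, le_rfl⟩
    | @step k hk ih =>
      intro x hx
      have hx' : x ∈ D k := hmonoD k hx
      obtain ⟨h1, h2⟩ := ih x hx'
      exact ⟨h1, h2.trans (hmono k x hx)⟩
  have tendsto_re : ∀ x ∈ Dinf, ∀ y ∈ Dinf,
      Tendsto (fun n => (a n x y).re) atTop (nhds ((ainf x y).re)) :=
    fun x hx y hy => (Complex.continuous_re.tendsto _).comp (hainf x hx y hy)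
  have a_le_ainf : ∀ x ∈ Dinf, ∀ n, (a n x x).re ≤ (ainf x x).re := by
    intro x hx n
    refine ge_of_tendsto (tendsto_re x hx x hx) ?_
    filter_upwards [eventually_ge_atTop n] with m hm
    exact (chain hm x (((hDmem x).1 hx).1 m)).2
  have part1 : ∀ u ∈ Dinf, ∀ v ∈ Dinf, ainf u v = (starRingEnd ℂ) (ainf v u) := by
    intro u hu v hv
    have h : Tendsto (fun n => (starRingEnd ℂ) (a n v u)) atTop
        (nhds ((starRingEnd ℂ) (ainf v u))) := by
      simpa only [starRingEnd_apply] using (hainf v hv u hu).star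
    have heqf : (fun n => (starRingEnd ℂ) (a n v u)) = fun n => a n u v := by
      funext n; exact (hsymm n u v).symm
    rw [heqf] at h
    exact tendsto_nhds_unique (hainf u hu v hv) h
  have part2 : ∀ u ∈ Dinf, 0 ≤ (ainf u u).re := fun u hu =>
    ge_of_tendsto (tendsto_re u hu u hu)
      (Eventually.of_forall fun n => hnonneg n u (((hDmem u).1 hu).1 n))
  have DinfSub : ∀ x ∈ Dinf, ∀ y ∈ Dinf, x - y ∈ Dinf := by
    intro x hx y hy
    obtain ⟨hx1, Cx, hCx⟩ := (hDmem x).1 hx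
    obtain ⟨hy1, Cy, hCy⟩ := (hDmem y).1 hy
    refine (hDmem _).2 ⟨fun n => Submodule.sub_mem _ (hx1 n) (hy1 n), ⟨2 * Cx + 2 * Cy, ?_⟩⟩
    rintro r ⟨n, rfl⟩
    have h1 := exps n x y
    have h2 := expa n x y
    have h3 : 0 ≤ (a n (x + y) (x + y)).re :=
      hnonneg n _ (Submodule.add_mem _ (hx1 n) (hy1 n))
    have h4 : (a n x x).re ≤ Cx := hCx (Set.mem_range_self n)
    have h5 : (a n y y).re ≤ Cy := hCy (Set.mem_range_self n)
    simp only
    linarith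
  have part3 : ∀ f : ℕ → H, (∀ m, f m ∈ Dinf) →
      (∀ ε : ℝ, 0 < ε → ∃ N : ℕ, ∀ k m, N ≤ k → N ≤ m →
        (ainf (f k - f m) (f k - f m)).re + ‖f k - f m‖ ^ 2 < ε) →
      ∃ u ∈ Dinf, Tendsto (fun m => (ainf (f m - u) (f m - u)).re + ‖f m - u‖ ^ 2)
        atTop (nhds 0) := by
    intro f hf hcau
    have hfD : ∀ m n, f m ∈ D n := fun m n => ((hDmem _).1 (hf m)).1 n
    have hfsub : ∀ k m, f k - f m ∈ Dinf := fun k m => DinfSub _ (hf k) _ (hf m)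
    have hcn : ∀ ε : ℝ, 0 < ε → ∃ N, ∀ k m, N ≤ k → N ≤ m → ∀ n,
        (a n (f k - f m) (f k - f m)).re + ‖f k - f m‖ ^ 2 < ε := by
      intro ε hε
      obtain ⟨N, hN⟩ := hcau ε hε
      refine ⟨N, fun k m hk hm n => lt_of_le_of_lt ?_ (hN k m hk hm)⟩
      have := a_le_ainf _ (hfsub k m) n
      linarith
    have key : ∀ n, ∃ u ∈ D n, Tendsto
        (fun m => (a n (f m - u) (f m - u)).re + ‖f m - u‖ ^ 2) atTop (nhds 0) := by
      intro n
      refine hclosed n f (fun m => hfD m n) ?_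
      intro ε hε
      obtain ⟨N, hN⟩ := hcn ε hε
      exact ⟨N, fun k m hk hm => hN k m hk hm n⟩
    choose g hgD hgT using key
    have hnn : ∀ n m, 0 ≤ (a n (f m - g n) (f m - g n)).re :=
      fun n m => hnonneg n _ (Submodule.sub_mem _ (hfD m n) (hgD n))
    have hfn : ∀ n, Tendsto f atTop (nhds (g n)) := by
      intro n
      rw [tendsto_iff_norm_sub_tendsto_zero]
      have hsq : Tendsto (fun m => ‖f m - g n‖ ^ 2) atTop (nhds 0) :=
        squeeze_zero (fun m => sq_nonneg _) (fun m => by nlinarith [hnn n m]) (hgT n)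
      have h2 := hsq.sqrt
      simp only [Real.sqrt_zero] at h2
      exact h2.congr fun m => Real.sqrt_sq (norm_nonneg _)
    have hgu : ∀ n, g n = g 0 := fun n => tendsto_nhds_unique (hfn n) (hfn 0)
    set u := g 0 with hu
    have huD : ∀ n, u ∈ D n := fun n => hgu n ▸ hgD n
    have hgT' : ∀ n, Tendsto (fun m => (a n (f m - u) (f m - u)).re + ‖f m - u‖ ^ 2)
        atTop (nhds 0) := by
      intro n; have h := hgT n; rw [hgu n] at h; exact h
    have hnn' : ∀ n m, 0 ≤ (a n (f m - u) (f m - u)).re :=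
      fun n m => hnonneg n _ (Submodule.sub_mem _ (hfD m n) (huD n))
    have hTa : ∀ n, Tendsto (fun m => (a n (f m - u) (f m - u)).re) atTop (nhds 0) :=
      fun n => squeeze_zero (hnn' n) (fun m => by nlinarith [sq_nonneg ‖f m - u‖]) (hgT' n)
    have hTnorm : Tendsto (fun m => ‖f m - u‖ ^ 2) atTop (nhds 0) :=
      squeeze_zero (fun m => sq_nonneg _) (fun m => by nlinarith [hnn' 0 m]) (hgT' 0)
    have star : ∀ ε : ℝ, 0 < ε → ∃ N, ∀ m, N ≤ m → ∀ n,
        (a n (f m - u) (f m - u)).re ≤ ε := by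
      intro ε hε
      obtain ⟨N, hN⟩ := hcn ε hε
      refine ⟨N, fun m hm n => ?_⟩
      have hsqrt : ∀ δ : ℝ, 0 < δ →
          Real.sqrt ((a n (f m - u) (f m - u)).re) ≤ Real.sqrt ε + δ := by
        intro δ hδ
        obtain ⟨k, hk1, hk2⟩ := (((hTa n).eventually
          (gt_mem_nhds (show (0:ℝ) < δ ^ 2 by positivity))).and (eventually_ge_atTop N)).exists
        have t1 : Real.sqrt ((a n (f m - f k) (f m - f k)).re) ≤ Real.sqrt ε := by
          refine Real.sqrt_le_sqrt ?_
          have := hN m k hm hk2 n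
          nlinarith [sq_nonneg ‖f m - f k‖]
        have t2 : Real.sqrt ((a n (f k - u) (f k - u)).re) ≤ δ := by
          rw [show δ = Real.sqrt (δ ^ 2) from (Real.sqrt_sq hδ.le).symm]
          exact Real.sqrt_le_sqrt hk1.le
        have t3 := tri' n (f m) (f k) u (hfD m n) (hfD k n) (huD n)
        linarith
      have h1 : Real.sqrt ((a n (f m - u) (f m - u)).re) ≤ Real.sqrt ε :=
        le_of_forall_pos_le_add hsqrt
      calc (a n (f m - u) (f m - u)).re
          = Real.sqrt ((a n (f m - u) (f m - u)).re) ^ 2 := (Real.sq_sqrt (hnn' n m)).symm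
        _ ≤ Real.sqrt ε ^ 2 := pow_le_pow_left₀ (Real.sqrt_nonneg _) h1 2
        _ = ε := Real.sq_sqrt hε.le
    obtain ⟨N1, hN1⟩ := star 1 one_pos
    have huDinf : u ∈ Dinf := by
      refine (hDmem _).2 ⟨huD, ⟨(1 + Real.sqrt ((ainf (f N1) (f N1)).re)) ^ 2, ?_⟩⟩
      rintro r ⟨n, rfl⟩
      have h0 : 0 ≤ (a n u u).re := hnonneg n u (huD n)
      have t3 : Real.sqrt ((a n u u).re) ≤ Real.sqrt ((a n (u - f N1) (u - f N1)).re)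
          + Real.sqrt ((a n (f N1) (f N1)).re) := by
        have h := tri n (u - f N1) (f N1) (Submodule.sub_mem _ (huD n) (hfD N1 n)) (hfD N1 n)
        rwa [sub_add_cancel] at h
      have t4 : (a n (u - f N1) (u - f N1)).re ≤ 1 := by
        rw [negd n u (f N1)]
        exact hN1 N1 le_rfl n
      have t5 : Real.sqrt ((a n (u - f N1) (u - f N1)).re) ≤ 1 := by
        calc Real.sqrt ((a n (u - f N1) (u - f N1)).re) ≤ Real.sqrt 1 := Real.sqrt_le_sqrt t4
          _ = 1 := Real.sqrt_one
      have t6 : Real.sqrt ((a n (f N1) (f N1)).re)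
          ≤ Real.sqrt ((ainf (f N1) (f N1)).re) :=
        Real.sqrt_le_sqrt (a_le_ainf _ (hf N1) n)
      simp only
      calc (a n u u).re = Real.sqrt ((a n u u).re) ^ 2 := (Real.sq_sqrt h0).symm
        _ ≤ (1 + Real.sqrt ((ainf (f N1) (f N1)).re)) ^ 2 :=
            pow_le_pow_left₀ (Real.sqrt_nonneg _) (by linarith) 2
    refine ⟨u, huDinf, ?_⟩
    rw [Metric.tendsto_atTop]
    intro ε hε
    obtain ⟨N2, hN2⟩ := star (ε/4) (by positivity)
    obtain ⟨N3, hN3⟩ := (eventually_atTop).1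
      (hTnorm.eventually (gt_mem_nhds (show (0:ℝ) < ε/4 by positivity)))
    refine ⟨max N2 N3, fun m hm => ?_⟩
    have hm2 : N2 ≤ m := le_trans (le_max_left _ _) hm
    have hm3 : N3 ≤ m := le_trans (le_max_right _ _) hm
    have hsubm : f m - u ∈ Dinf := DinfSub _ (hf m) _ huDinf
    have hA : (ainf (f m - u) (f m - u)).re ≤ ε/4 :=
      le_of_tendsto (tendsto_re _ hsubm _ hsubm)
        (Eventually.of_forall fun n => hN2 m hm2 n)
    have hB := hN3 m hm3
    have hpos2 : 0 ≤ (ainf (f m - u) (f m - u)).re := part2 _ hsubm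
    rw [Real.dist_eq, sub_zero, abs_of_nonneg (by nlinarith [sq_nonneg ‖f m - u‖])]
    nlinarith [sq_nonneg ‖f m - u‖]
  have part4 : ∀ lam : ℝ, lam < 0 → ∀ u : H, ∀ w : ℕ → H, ∀ winf : H,
      (∀ n, w n ∈ D n ∧ ∀ v ∈ D n,
        (lam : ℂ) * (inner ℂ v (w n) : ℂ) - a n (w n) v = (inner ℂ v u : ℂ)) →
      (winf ∈ Dinf ∧ ∀ v ∈ Dinf,
        (lam : ℂ) * (inner ℂ v winf : ℂ) - ainf winf v = (inner ℂ v u : ℂ)) →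
      Tendsto w atTop (nhds winf) := by
    intro lam hlam u w winf hw hwinf
    set L := -lam with hL
    have hLpos : 0 < L := by simp [hL]; linarith
    have hwD : ∀ n, w n ∈ D n := fun n => (hw n).1
    have heq : ∀ n, ∀ v ∈ D n,
        (lam : ℂ) * (inner ℂ v (w n) : ℂ) - a n (w n) v = (inner ℂ v u : ℂ) :=
      fun n => (hw n).2
    have hwinfD : winf ∈ Dinf := hwinf.1
    have hwinfDn : ∀ n, winf ∈ D n := fun n => ((hDmem winf).1 hwinfD).1 n
    have heqinf := hwinf.2
    -- diagonal identity
    have diag : ∀ n, (a n (w n) (w n)).re - lam * ‖w n‖ ^ 2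
        = - (inner ℂ (w n) u : ℂ).re := by
      intro n
      have h := heq n (w n) (hwD n)
      have h3 := congrArg Complex.re h
      simp only [Complex.sub_re, Complex.mul_re, Complex.ofReal_re, Complex.ofReal_im,
        zero_mul, sub_zero] at h3
      have h4 : (inner ℂ (w n) (w n) : ℂ).re = ‖w n‖ ^ 2 := by
        rw [← RCLike.re_to_complex]
        exact inner_self_eq_norm_sq (w n)
      rw [h4] at h3
      linarith
    have diaginf : (ainf winf winf).re - lam * ‖winf‖ ^ 2
        = - (inner ℂ winf u : ℂ).re := by
      have h := heqinf winf hwinfD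
      have h3 := congrArg Complex.re h
      simp only [Complex.sub_re, Complex.mul_re, Complex.ofReal_re, Complex.ofReal_im,
        zero_mul, sub_zero] at h3
      have h4 : (inner ℂ winf winf : ℂ).re = ‖winf‖ ^ 2 := by
        rw [← RCLike.re_to_complex]
        exact inner_self_eq_norm_sq winf
      rw [h4] at h3
      linarith
    -- bounds on w n
    have hEbound : ∀ n, - (inner ℂ (w n) u : ℂ).re ≤ ‖w n‖ * ‖u‖ := by
      intro n
      have h1 : |(inner ℂ (w n) u : ℂ).re| ≤ ‖w n‖ * ‖u‖ := by
        calc |(inner ℂ (w n) u : ℂ).re| ≤ ‖(inner ℂ (w n) u : ℂ)‖ :=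
              Complex.abs_re_le_norm _
          _ = ‖(inner ℂ (w n) u : ℂ)‖ := rfl
          _ ≤ ‖w n‖ * ‖u‖ := norm_inner_le_norm _ _
      linarith [neg_abs_le ((inner ℂ (w n) u : ℂ).re)]
    have normb : ∀ n, ‖w n‖ ≤ ‖u‖ / L := by
      intro n
      have h1 : 0 ≤ (a n (w n) (w n)).re := hnonneg n _ (hwD n)
      have h3 : L * ‖w n‖ ^ 2 ≤ ‖w n‖ * ‖u‖ := by
        have hd := diag n
        have he := hEbound n
        nlinarith
      rcases eq_or_lt_of_le (norm_nonneg (w n)) with h0 | h0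
      · rw [← h0]; positivity
      · rw [le_div_iff₀ hLpos]; nlinarith
    have ab : ∀ n, (a n (w n) (w n)).re ≤ ‖u‖ ^ 2 / L := by
      intro n
      have hd := diag n
      have he := hEbound n
      have hb := normb n
      have h2 : ‖w n‖ * ‖u‖ ≤ (‖u‖ / L) * ‖u‖ :=
        mul_le_mul_of_nonneg_right hb (norm_nonneg u)
      have h3 : (‖u‖ / L) * ‖u‖ = ‖u‖ ^ 2 / L := by ring
      nlinarith [sq_nonneg ‖w n‖]
    -- key difference inequality
    have key : ∀ n m, n ≤ m → (a n (w m - w n) (w m - w n)).re + L * ‖w m - w n‖ ^ 2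
        ≤ (inner ℂ (w m) u : ℂ).re - (inner ℂ (w n) u : ℂ).re := by
      intro n m hnm
      have hwmn : w m ∈ D n := (chain hnm _ (hwD m)).1
      have hle : (a n (w m) (w m)).re ≤ (a m (w m) (w m)).re := (chain hnm _ (hwD m)).2
      have hcross := heq n (w m) hwmn
      have hcross_re : lam * (inner ℂ (w m) (w n) : ℂ).re - (a n (w n) (w m)).re
          = (inner ℂ (w m) u : ℂ).re := by
        have h2 := congrArg Complex.re hcross
        simp only [Complex.sub_re, Complex.mul_re, Complex.ofReal_re,
          Complex.ofReal_im] at h2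
        linarith
      have he := exps n (w m) (w n)
      have hn : ‖w m - w n‖ ^ 2
          = ‖w m‖ ^ 2 - 2 * (inner ℂ (w m) (w n) : ℂ).re + ‖w n‖ ^ 2 := by
        have h := @norm_sub_sq ℂ H _ _ _ (w m) (w n)
        simpa [RCLike.re_to_complex] using h
      have hre : (a n (w m) (w n)).re = (a n (w n) (w m)).re :=
        form_re_symm (a n) (hsymm n) _ _
      have hdn := diag n
      have hdm := diag m
      have hL' : L = -lam := hL
      nlinarith [hle]
    have keyinf : ∀ n, (a n (winf - w n) (winf - w n)).re + L * ‖winf - w n‖ ^ 2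
        ≤ (inner ℂ winf u : ℂ).re - (inner ℂ (w n) u : ℂ).re := by
      intro n
      have hle : (a n winf winf).re ≤ (ainf winf winf).re := a_le_ainf _ hwinfD n
      have hcross := heq n winf (hwinfDn n)
      have hcross_re : lam * (inner ℂ winf (w n) : ℂ).re - (a n (w n) winf).re
          = (inner ℂ winf u : ℂ).re := by
        have h2 := congrArg Complex.re hcross
        simp only [Complex.sub_re, Complex.mul_re, Complex.ofReal_re,
          Complex.ofReal_im] at h2
        linarith
      have he := exps n winf (w n)
      have hn : ‖winf - w n‖ ^ 2
          = ‖winf‖ ^ 2 - 2 * (inner ℂ winf (w n) : ℂ).re + ‖w n‖ ^ 2 := by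
        have h := @norm_sub_sq ℂ H _ _ _ winf (w n)
        simpa [RCLike.re_to_complex] using h
      have hre : (a n winf (w n)).re = (a n (w n) winf).re :=
        form_re_symm (a n) (hsymm n) _ _
      have hdn := diag n
      have hdm := diaginf
      have hL' : L = -lam := hL
      nlinarith [hle]
    -- monotone bounded
    have Emono : ∀ n m, n ≤ m → (inner ℂ (w n) u : ℂ).re ≤ (inner ℂ (w m) u : ℂ).re := by
      intro n m h
      have h1 := key n m h
      have h2 : 0 ≤ (a n (w m - w n) (w m - w n)).re :=
        hnonneg n _ (Submodule.sub_mem _ (chain h _ (hwD m)).1 (hwD n))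
      nlinarith [sq_nonneg ‖w m - w n‖]
    have Ebdd : ∀ n, (inner ℂ (w n) u : ℂ).re ≤ (inner ℂ winf u : ℂ).re := by
      intro n
      have h1 := keyinf n
      have h2 : 0 ≤ (a n (winf - w n) (winf - w n)).re :=
        hnonneg n _ (Submodule.sub_mem _ (hwinfDn n) (hwD n))
      nlinarith [sq_nonneg ‖winf - w n‖]
    have hEmono : Monotone (fun n => (inner ℂ (w n) u : ℂ).re) := fun n m h => Emono n m h
    have hEbddA : BddAbove (Set.range fun n => (inner ℂ (w n) u : ℂ).re) :=
      ⟨(inner ℂ winf u : ℂ).re, by rintro r ⟨n, rfl⟩; exact Ebdd n⟩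
    have hEtend : Tendsto (fun n => (inner ℂ (w n) u : ℂ).re) atTop
        (nhds (⨆ n, (inner ℂ (w n) u : ℂ).re)) := tendsto_atTop_ciSup hEmono hEbddA
    set S := ⨆ n, (inner ℂ (w n) u : ℂ).re with hS
    have hES : ∀ n, (inner ℂ (w n) u : ℂ).re ≤ S := fun n => le_ciSup hEbddA n
    have key2 : ∀ n m, n ≤ m →
        (a n (w m - w n) (w m - w n)).re + L * ‖w m - w n‖ ^ 2
          ≤ S - (inner ℂ (w n) u : ℂ).re := by
      intro n m h
      have := key n m h
      have := hES m
      linarith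
    -- apply closedness for each k
    have hcl : ∀ k, ∃ q ∈ D k, Tendsto
        (fun m => (a k (w (m + k) - q) (w (m + k) - q)).re + ‖w (m + k) - q‖ ^ 2)
        atTop (nhds 0) := by
      intro k
      apply hclosed k (fun m => w (m + k))
        (fun m => (chain (Nat.le_add_left k m) _ (hwD (m + k))).1)
      intro ε hε
      have hc : 0 < 1 + 1 / L := by positivity
      have hev : ∀ᶠ N in atTop, S - (inner ℂ (w (N + k)) u : ℂ).re < ε / (1 + 1 / L) := by
        have htail : Tendsto (fun N => (inner ℂ (w (N + k)) u : ℂ).re) atTop (nhds S) :=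
          hEtend.comp (tendsto_add_atTop_nat k)
        have h9 : S - ε / (1 + 1 / L) < S := by
          have h8 : 0 < ε / (1 + 1 / L) := by positivity
          linarith
        have := htail.eventually (lt_mem_nhds h9)
        filter_upwards [this] with N hN
        linarith
      obtain ⟨N, hN⟩ := hev.exists
      have claim : ∀ i j, N ≤ i → N ≤ j → j ≤ i →
          (a k (w (i + k) - w (j + k)) (w (i + k) - w (j + k))).re
            + ‖w (i + k) - w (j + k)‖ ^ 2 < ε := by
        intro i j hi hj hji
        have hjk : j + k ≤ i + k := by omega
        have hkjk : k ≤ j + k := by omega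
        have hdD : w (i + k) - w (j + k) ∈ D (j + k) :=
          Submodule.sub_mem _ (chain hjk _ (hwD (i + k))).1 (hwD (j + k))
        have h2 := key2 (j + k) (i + k) hjk
        have h3 : (a k (w (i + k) - w (j + k)) (w (i + k) - w (j + k))).re
            ≤ (a (j + k) (w (i + k) - w (j + k)) (w (i + k) - w (j + k))).re :=
          (chain hkjk _ hdD).2
        have hEm : (inner ℂ (w (N + k)) u : ℂ).re ≤ (inner ℂ (w (j + k)) u : ℂ).re :=
          Emono _ _ (by omega)
        set r := S - (inner ℂ (w (j + k)) u : ℂ).re with hr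
        have hnonneg2 : 0 ≤ (a (j + k) (w (i + k) - w (j + k)) (w (i + k) - w (j + k))).re :=
          hnonneg _ _ hdD
        have e1 : (a k (w (i + k) - w (j + k)) (w (i + k) - w (j + k))).re ≤ r := by
          linarith [mul_nonneg hLpos.le (sq_nonneg ‖w (i + k) - w (j + k)‖)]
        have e2 : L * ‖w (i + k) - w (j + k)‖ ^ 2 ≤ r := by linarith
        have e3 : ‖w (i + k) - w (j + k)‖ ^ 2 ≤ r / L := by
          rw [le_div_iff₀ hLpos, mul_comm]; exact e2
        have e4 : r ≤ S - (inner ℂ (w (N + k)) u : ℂ).re := by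
          rw [hr]; linarith
        have e5 : (S - (inner ℂ (w (N + k)) u : ℂ).re) * (1 + 1 / L) < ε :=
          (lt_div_iff₀ hc).1 hN
        have e6 : r / L ≤ (S - (inner ℂ (w (N + k)) u : ℂ).re) / L :=
          (div_le_div_iff_of_pos_right hLpos).2 e4
        have e7 : (S - (inner ℂ (w (N + k)) u : ℂ).re) + (S - (inner ℂ (w (N + k)) u : ℂ).re) / L
            = (S - (inner ℂ (w (N + k)) u : ℂ).re) * (1 + 1 / L) := by ring
        linarith
      refine ⟨N, fun i j hi hj => ?_⟩
      rcases le_total j i with hji | hij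
      · exact claim i j hi hj hji
      · have h := claim j i hj hi hij
        rwa [negd, norm_sub_rev] at h
    choose q hqD hqT using hcl
    have hqT' : ∀ k, Tendsto
        (fun m => (a k (w m - q k) (w m - q k)).re + ‖w m - q k‖ ^ 2) atTop (nhds 0) :=
      fun k => (Filter.tendsto_add_atTop_iff_nat k).1 (hqT k)
    have hnnq : ∀ k m, k ≤ m → 0 ≤ (a k (w m - q k) (w m - q k)).re := fun k m h =>
      hnonneg k _ (Submodule.sub_mem _ (chain h _ (hwD m)).1 (hqD k))
    have hwq : ∀ k, Tendsto w atTop (nhds (q k)) := by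
      intro k
      rw [tendsto_iff_norm_sub_tendsto_zero]
      have hsq : Tendsto (fun m => ‖w m - q k‖ ^ 2) atTop (nhds 0) := by
        refine squeeze_zero' (Eventually.of_forall fun m => sq_nonneg _) ?_ (hqT' k)
        filter_upwards [eventually_ge_atTop k] with m hm
        nlinarith [hnnq k m hm]
      have h2 := hsq.sqrt
      simp only [Real.sqrt_zero] at h2
      exact h2.congr fun m => Real.sqrt_sq (norm_nonneg _)
    have hqeq : ∀ k, q k = q 0 := fun k => tendsto_nhds_unique (hwq k) (hwq 0)
    set qb := q 0 with hqb
    have hqD' : ∀ k, qb ∈ D k := fun k => hqeq k ▸ hqD k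
    have hwq0 : Tendsto w atTop (nhds qb) := hwq 0
    have hqT'' : ∀ k, Tendsto (fun m => (a k (w m - qb) (w m - qb)).re) atTop (nhds 0) := by
      intro k
      have h := hqT' k
      rw [hqeq k] at h
      have h1 : ∀ᶠ m in atTop, 0 ≤ (a k (w m - qb) (w m - qb)).re := by
        filter_upwards [eventually_ge_atTop k] with m hm
        exact hnonneg k _ (Submodule.sub_mem _ (chain hm _ (hwD m)).1 (hqD' k))
      have h2 : ∀ᶠ m in atTop, (a k (w m - qb) (w m - qb)).re
          ≤ (a k (w m - qb) (w m - qb)).re + ‖w m - qb‖ ^ 2 :=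
        Eventually.of_forall fun m => by nlinarith [sq_nonneg ‖w m - qb‖]
      exact squeeze_zero' h1 h2 h
    -- (G)
    have hG : ∀ n, (a n (w n - qb) (w n - qb)).re ≤ S - (inner ℂ (w n) u : ℂ).re := by
      intro n
      have hc0 : 0 ≤ S - (inner ℂ (w n) u : ℂ).re := by linarith [hES n]
      have hmem : w n - qb ∈ D n := Submodule.sub_mem _ (hwD n) (hqD' n)
      have hx0 : 0 ≤ (a n (w n - qb) (w n - qb)).re := hnonneg n _ hmem
      have hs : Real.sqrt ((a n (w n - qb) (w n - qb)).re)
          ≤ Real.sqrt (S - (inner ℂ (w n) u : ℂ).re) := by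
        refine le_of_forall_pos_le_add fun δ hδ => ?_
        obtain ⟨m, hm1, hm2⟩ := (((hqT'' n).eventually
          (gt_mem_nhds (show (0:ℝ) < δ ^ 2 by positivity))).and (eventually_ge_atTop n)).exists
        have hwm : w m ∈ D n := (chain hm2 _ (hwD m)).1
        have t3 := tri' n (w n) (w m) qb (hwD n) hwm (hqD' n)
        have t1 : Real.sqrt ((a n (w n - w m) (w n - w m)).re)
            ≤ Real.sqrt (S - (inner ℂ (w n) u : ℂ).re) := by
          refine Real.sqrt_le_sqrt ?_
          rw [negd]
          have := key2 n m hm2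
          nlinarith [mul_nonneg hLpos.le (sq_nonneg ‖w m - w n‖)]
        have t2 : Real.sqrt ((a n (w m - qb) (w m - qb)).re) ≤ δ := by
          rw [show δ = Real.sqrt (δ ^ 2) from (Real.sqrt_sq hδ.le).symm]
          exact Real.sqrt_le_sqrt hm1.le
        linarith
      calc (a n (w n - qb) (w n - qb)).re
          = Real.sqrt ((a n (w n - qb) (w n - qb)).re) ^ 2 := (Real.sq_sqrt hx0).symm
        _ ≤ Real.sqrt (S - (inner ℂ (w n) u : ℂ).re) ^ 2 :=
            pow_le_pow_left₀ (Real.sqrt_nonneg _) hs 2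
        _ = S - (inner ℂ (w n) u : ℂ).re := Real.sq_sqrt hc0
    -- qb ∈ Dinf
    have hqbDinf : qb ∈ Dinf := by
      refine (hDmem _).2 ⟨hqD', ⟨(1 + Real.sqrt (‖u‖ ^ 2 / L)) ^ 2, ?_⟩⟩
      rintro r ⟨k, rfl⟩
      obtain ⟨m, hm1, hm2⟩ := (((hqT'' k).eventually (gt_mem_nhds one_pos)).and
        (eventually_ge_atTop k)).exists
      have hwm : w m ∈ D k := (chain hm2 _ (hwD m)).1
      have h0 : 0 ≤ (a k qb qb).re := hnonneg k _ (hqD' k)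
      have t3 : Real.sqrt ((a k qb qb).re) ≤ Real.sqrt ((a k (qb - w m) (qb - w m)).re)
          + Real.sqrt ((a k (w m) (w m)).re) := by
        have h := tri k (qb - w m) (w m) (Submodule.sub_mem _ (hqD' k) hwm) hwm
        rwa [sub_add_cancel] at h
      have t4 : Real.sqrt ((a k (qb - w m) (qb - w m)).re) ≤ 1 := by
        rw [negd]
        calc Real.sqrt ((a k (w m - qb) (w m - qb)).re) ≤ Real.sqrt 1 :=
            Real.sqrt_le_sqrt hm1.le
          _ = 1 := Real.sqrt_one
      have t5 : Real.sqrt ((a k (w m) (w m)).re) ≤ Real.sqrt (‖u‖ ^ 2 / L) :=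
        Real.sqrt_le_sqrt ((chain hm2 _ (hwD m)).2.trans (ab m))
      simp only
      calc (a k qb qb).re = Real.sqrt ((a k qb qb).re) ^ 2 := (Real.sq_sqrt h0).symm
        _ ≤ (1 + Real.sqrt (‖u‖ ^ 2 / L)) ^ 2 :=
            pow_le_pow_left₀ (Real.sqrt_nonneg _) (by linarith) 2
    -- (H)
    have hH : ∀ x ∈ Dinf, (lam : ℂ) * (inner ℂ x qb : ℂ) - ainf qb x = (inner ℂ x u : ℂ) := by
      intro x hx
      have hxD : ∀ n, x ∈ D n := fun n => ((hDmem x).1 hx).1 n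
      have hconv1 : Tendsto (fun n => (lam : ℂ) * (inner ℂ x (w n) : ℂ)) atTop
          (nhds ((lam : ℂ) * (inner ℂ x qb : ℂ))) :=
        tendsto_const_nhds.mul (tendsto_const_nhds.inner hwq0)
      have hconv2 : Tendsto (fun n => a n (w n - qb) x) atTop (nhds 0) := by
        apply squeeze_zero_norm (a := fun n =>
          Real.sqrt (S - (inner ℂ (w n) u : ℂ).re) * Real.sqrt ((ainf x x).re))
        · intro n
          have hmem : w n - qb ∈ D n := Submodule.sub_mem _ (hwD n) (hqD' n)
          have hcs := cs n (w n - qb) x hmem (hxD n)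
          have h1 : ‖a n (w n - qb) x‖
              ≤ Real.sqrt ((a n (w n - qb) (w n - qb)).re) * Real.sqrt ((a n x x).re) := by
            rw [← Real.sqrt_mul (hnonneg n _ hmem)]
            rw [show ‖a n (w n - qb) x‖
              = Real.sqrt (‖a n (w n - qb) x‖ ^ 2) from
              (Real.sqrt_sq (norm_nonneg _)).symm]
            exact Real.sqrt_le_sqrt hcs
          have h2 : Real.sqrt ((a n (w n - qb) (w n - qb)).re)
              ≤ Real.sqrt (S - (inner ℂ (w n) u : ℂ).re) := Real.sqrt_le_sqrt (hG n)
          have h3 : Real.sqrt ((a n x x).re) ≤ Real.sqrt ((ainf x x).re) :=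
            Real.sqrt_le_sqrt (a_le_ainf x hx n)
          calc ‖a n (w n - qb) x‖
              ≤ Real.sqrt ((a n (w n - qb) (w n - qb)).re) * Real.sqrt ((a n x x).re) := h1
            _ ≤ Real.sqrt (S - (inner ℂ (w n) u : ℂ).re) * Real.sqrt ((ainf x x).re) :=
              mul_le_mul h2 h3 (Real.sqrt_nonneg _) (Real.sqrt_nonneg _)
        · have hz : Tendsto (fun n => S - (inner ℂ (w n) u : ℂ).re) atTop (nhds 0) := by
            have := (tendsto_const_nhds (x := S) (f := (atTop : Filter ℕ))).sub hEtend
            simpa using this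
          have hzz := (hz.sqrt).mul_const (Real.sqrt ((ainf x x).re))
          simpa using hzz
      have hconv3 : Tendsto (fun n => a n qb x) atTop (nhds (ainf qb x)) :=
        hainf qb hqbDinf x hx
      have hsplit : ∀ n, (lam : ℂ) * (inner ℂ x (w n) : ℂ) - a n (w n) x
          = (lam : ℂ) * (inner ℂ x (w n) : ℂ) - (a n (w n - qb) x + a n qb x) := by
        intro n
        rw [sub₁]
        ring
      have hfinal : Tendsto (fun n => (lam : ℂ) * (inner ℂ x (w n) : ℂ) - a n (w n) x) atTop
          (nhds ((lam : ℂ) * (inner ℂ x qb : ℂ) - (0 + ainf qb x))) :=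
        Tendsto.congr (fun n => (hsplit n).symm) (hconv1.sub (hconv2.add hconv3))
      have hconst : (fun n => (lam : ℂ) * (inner ℂ x (w n) : ℂ) - a n (w n) x)
          = fun _ => (inner ℂ x u : ℂ) := funext fun n => heq n x (hxD n)
      rw [hconst] at hfinal
      have hu := tendsto_nhds_unique hfinal tendsto_const_nhds
      rw [zero_add] at hu
      exact hu
    -- (I) uniqueness
    have hd : qb - winf ∈ Dinf := DinfSub _ hqbDinf _ hwinfD
    have h1 := hH (qb - winf) hd
    have h2 := heqinf (qb - winf) hd
    have hsub : ainf qb (qb - winf) - ainf winf (qb - winf)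
        = ainf (qb - winf) (qb - winf) := by
      have T1 : Tendsto (fun n => a n qb (qb - winf) - a n winf (qb - winf)) atTop
          (nhds (ainf qb (qb - winf) - ainf winf (qb - winf))) :=
        (hainf qb hqbDinf _ hd).sub (hainf winf hwinfD _ hd)
      have T2 : Tendsto (fun n => a n qb (qb - winf) - a n winf (qb - winf)) atTop
          (nhds (ainf (qb - winf) (qb - winf))) :=
        Tendsto.congr (fun n => sub₁ n qb winf (qb - winf)) (hainf _ hd _ hd)
      exact tendsto_nhds_unique T1 T2
    have hin : (inner ℂ (qb - winf) (qb - winf) : ℂ)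
        = inner ℂ (qb - winf) qb - inner ℂ (qb - winf) winf := inner_sub_right _ _ _
    have h3 : (lam : ℂ) * (inner ℂ (qb - winf) (qb - winf) : ℂ)
        - ainf (qb - winf) (qb - winf) = 0 := by
      linear_combination h1 - h2 + (lam : ℂ) * hin + hsub
    have h4 := congrArg Complex.re h3
    have h5 : (inner ℂ (qb - winf) (qb - winf) : ℂ).re = ‖qb - winf‖ ^ 2 := by
      rw [← RCLike.re_to_complex]
      exact inner_self_eq_norm_sq _
    simp only [Complex.sub_re, Complex.mul_re, Complex.ofReal_re, Complex.ofReal_im,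
      zero_mul, sub_zero, Complex.zero_re] at h4
    rw [h5] at h4
    have h6 : 0 ≤ (ainf (qb - winf) (qb - winf)).re := part2 _ hd
    have h7 : ‖qb - winf‖ ^ 2 ≤ 0 := by nlinarith [sq_nonneg ‖qb - winf‖]
    have h8 : qb = winf := by
      have h9 : ‖qb - winf‖ = 0 := by nlinarith [norm_nonneg (qb - winf)]
      exact sub_eq_zero.1 (norm_eq_zero.1 h9)
    rw [← h8]
    exact hwq0
  exact ⟨part1, part2, part3, part4⟩
end

section
/- Let H be a Hilbert space, H₀ ⊆ H a closed subspace with orthogonal projection P, and for each κ ≥ 1 let T_κ(t) be a contraction C₀-semigroup on H such that for all u ∈ H and t > 0, T_κ(t)u → e^{tB}Pu as κ → ∞, where B is a bounded operator on H₀. Then for every Bochner-integrable f : [0,t₀] → H and u₀ ∈ H, the mild solutions z_κ(t) = T_κ(t)u₀ + ∫₀ᵗ T_κ(t−s)f(s) ds converge for each t ∈ (0,t₀] to z(t) = e^{tB}Pu₀ + ∫₀ᵗ e^{(t−s)B}Pf(s) ds. -/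
open Filter MeasureTheory NormedSpace

/-- If contraction `C₀`-semigroups `T_κ` on a Hilbert space `H` converge strongly (for each
`t > 0`) to the degenerate semigroup `e^{tB} P`, where `P` is the orthogonal projection onto a
closed subspace `H₀` (realized as a Hilbert space isometrically embedded in `H` via `ι`) and
`B` is a bounded operator on `H₀`, then the mild solutions
`z_κ(t) = T_κ(t)u₀ + ∫₀ᵗ T_κ(t−s) f(s) ds` of the inhomogeneous Cauchy problems converge, for
each `t ∈ (0, t₀]`, to `e^{tB}Pu₀ + ∫₀ᵗ e^{(t−s)B} P f(s) ds`. -/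
theorem mild_solutions_converge_of_semigroup_convergence
    {H H₀ : Type*} [NormedAddCommGroup H] [InnerProductSpace ℂ H] [CompleteSpace H]
    [NormedAddCommGroup H₀] [InnerProductSpace ℂ H₀] [CompleteSpace H₀]
    (ι : H₀ →ₗᵢ[ℂ] H) (hclosed : IsClosed (Set.range ι))
    (P : H →L[ℂ] H₀)
    (hP₁ : ∀ v : H₀, P (ι v) = v)
    (hP₂ : ∀ u : H, ∀ v : H₀, (inner ℂ (u - ι (P u)) (ι v) : ℂ) = 0)
    (B : H₀ →L[ℂ] H₀)
    (T : ℝ → ℝ → H →L[ℂ] H)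
    (hsg0 : ∀ κ : ℝ, 1 ≤ κ → T κ 0 = ContinuousLinearMap.id ℂ H)
    (hsg : ∀ κ : ℝ, 1 ≤ κ → ∀ s t : ℝ, 0 ≤ s → 0 ≤ t →
      T κ (s + t) = (T κ s).comp (T κ t))
    (hcont : ∀ κ : ℝ, 1 ≤ κ → ∀ u : H, ContinuousOn (fun t => T κ t u) (Set.Ici 0))
    (hcontr : ∀ κ : ℝ, 1 ≤ κ → ∀ t : ℝ, 0 ≤ t → ‖T κ t‖ ≤ 1)
    (hconv : ∀ (u : H) (t : ℝ), 0 < t →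
      Tendsto (fun κ => T κ t u) atTop (nhds (ι (exp (t • B) (P u)))))
    (t₀ : ℝ) (ht₀ : 0 < t₀) (f : ℝ → H) (hf : IntegrableOn f (Set.Icc 0 t₀)) (u₀ : H) :
    ∀ t ∈ Set.Ioc 0 t₀,
      Tendsto (fun κ => T κ t u₀ + ∫ s in Set.Icc 0 t, T κ (t - s) (f s)) atTop
        (nhds (ι (exp (t • B) (P u₀)) +
          ∫ s in Set.Icc 0 t, ι (exp ((t - s) • B) (P (f s))))) := by
  intro t ht
  obtain ⟨ht0, htt₀⟩ := ht
  -- joint continuity of (a, u) ↦ T κ (max a 0) u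
  have key : ∀ κ : ℝ, 1 ≤ κ → Continuous (fun p : ℝ × H => T κ (max p.1 0) p.2) := by
    intro κ hκ
    have hOn : ContinuousOn (fun p : ℝ × H => T κ p.1 p.2)
        ((Set.Ici 0) ×ˢ (Set.univ : Set H)) := by
      rintro ⟨a, u⟩ ⟨ha, -⟩
      rw [Metric.continuousWithinAt_iff]
      intro ε hε
      have hc := (hcont κ hκ u a ha)
      rw [Metric.continuousWithinAt_iff] at hc
      obtain ⟨δ, hδ, hδ'⟩ := hc (ε / 2) (by linarith)
      refine ⟨min δ (ε / 2), by positivity, ?_⟩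
      rintro ⟨b, v⟩ ⟨hb, -⟩ hdist
      have hd1 : dist b a < δ := by
        have := le_trans (le_max_left _ (dist v u)) (le_of_lt hdist)
        calc dist b a ≤ max (dist b a) (dist v u) := le_max_left _ _
          _ < min δ (ε / 2) := by
              simpa [Prod.dist_eq] using hdist
          _ ≤ δ := min_le_left _ _
      have hd2 : dist v u < ε / 2 := by
        calc dist v u ≤ max (dist b a) (dist v u) := le_max_right _ _
          _ < min δ (ε / 2) := by simpa [Prod.dist_eq] using hdist
          _ ≤ ε / 2 := min_le_right _ _
      have h1 : dist (T κ b v) (T κ b u) ≤ dist v u := by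
        rw [dist_eq_norm, dist_eq_norm, ← map_sub]
        calc ‖T κ b (v - u)‖ ≤ ‖T κ b‖ * ‖v - u‖ := (T κ b).le_opNorm _
          _ ≤ 1 * ‖v - u‖ := by
              exact mul_le_mul_of_nonneg_right (hcontr κ hκ b hb) (norm_nonneg _)
          _ = ‖v - u‖ := one_mul _
      have h2 : dist (T κ b u) (T κ a u) < ε / 2 := hδ' hb hd1
      calc dist (T κ b v) (T κ a u)
          ≤ dist (T κ b v) (T κ b u) + dist (T κ b u) (T κ a u) := dist_triangle _ _ _
        _ < ε / 2 + ε / 2 := by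
            exact add_lt_add_of_le_of_lt (le_trans h1 hd2.le) h2
        _ = ε := by ring
    have hmap : Continuous (fun p : ℝ × H => ((max p.1 0, p.2) : ℝ × H)) :=
      ((continuous_fst.max continuous_const)).prodMk continuous_snd
    exact hOn.comp_continuous hmap (fun p => ⟨Set.mem_Ici.mpr (le_max_right _ _), Set.mem_univ _⟩)
  set μ := volume.restrict (Set.Icc (0:ℝ) t) with hμ
  have hfint : IntegrableOn f (Set.Icc 0 t) :=
    hf.mono_set (Set.Icc_subset_Icc le_rfl htt₀)
  have hae_mem : ∀ᵐ s ∂μ, s ∈ Set.Icc 0 t := ae_restrict_mem measurableSet_Icc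
  have hae_ne : ∀ᵐ s ∂μ, s ≠ t := by
    refine ae_iff.mpr ?_
    have hset : {a : ℝ | ¬ a ≠ t} = {t} := by ext a; simp
    rw [hset, hμ, Measure.restrict_apply (measurableSet_singleton t)]
    exact measure_mono_null Set.inter_subset_left Real.volume_singleton
  -- measurability of each F κ
  have hmeas : ∀ κ : ℝ, 1 ≤ κ →
      AEStronglyMeasurable (fun s => T κ (t - s) (f s)) μ := by
    intro κ hκ
    have h1 : AEStronglyMeasurable (fun s => ((t - s, f s) : ℝ × H)) μ :=
      (Continuous.aestronglyMeasurable (by continuity)).prodMk hfint.aestronglyMeasurable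
    have h2 : AEStronglyMeasurable (fun s => T κ (max (t - s) 0) (f s)) μ :=
      (key κ hκ).comp_aestronglyMeasurable h1
    refine h2.congr ?_
    filter_upwards [hae_mem] with s hs
    have : (0:ℝ) ≤ t - s := by linarith [hs.2]
    simp [max_eq_left this]
  have hI : Tendsto (fun κ => ∫ s in Set.Icc 0 t, T κ (t - s) (f s)) atTop
      (nhds (∫ s in Set.Icc 0 t, ι (exp ((t - s) • B) (P (f s))))) := by
    refine tendsto_integral_filter_of_dominated_convergence (fun s => ‖f s‖)
      ?_ ?_ hfint.norm ?_
    · filter_upwards [eventually_ge_atTop (1:ℝ)] with κ hκ using hmeas κ hκ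
    · filter_upwards [eventually_ge_atTop (1:ℝ)] with κ hκ
      filter_upwards [hae_mem] with s hs
      have h0 : (0:ℝ) ≤ t - s := by linarith [hs.2]
      calc ‖T κ (t - s) (f s)‖ ≤ ‖T κ (t - s)‖ * ‖f s‖ := (T κ (t-s)).le_opNorm _
        _ ≤ 1 * ‖f s‖ := mul_le_mul_of_nonneg_right (hcontr κ hκ _ h0) (norm_nonneg _)
        _ = ‖f s‖ := one_mul _
    · filter_upwards [hae_mem, hae_ne] with s hs hne
      have : 0 < t - s := lt_of_le_of_ne (by linarith [hs.2]) (by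
        intro h; exact hne (by linarith))
      exact hconv (f s) (t - s) this
  exact (hconv u₀ t ht0).add hI
end

section
/- Let Ω_k, Ω_ℓ ⊂ ℝᵈ be disjoint open sets with Lipschitz boundaries Γ_k, Γ_ℓ. Suppose V ⊆ Γ_k ∩ Γ_ℓ is a nonempty set, relatively open in both Γ_k and Γ_ℓ, such that there exist: cylinders C_i = B_i × (a_i, b_i) (B_i an open ball in ℝ^{d−1}), an isometry J of ℝᵈ, and Lipschitz functions g_i : B_i → ℝ (i = k, ℓ) with, setting φ_i(w,t) = t − g_i(w): Ω_k ∩ C_k = {φ_k < 0}, C_k \ closure(Ω_k) = {φ_k > 0}, V = {φ_k = 0}, and Ω_ℓ ∩ C_ℓ = J{φ_ℓ < 0}, C_ℓ \ closure(Ω_ℓ) = J{φ_ℓ > 0}, V = J{φ_ℓ = 0}. Then the set {φ_k > 0} ∩ J{φ_ℓ > 0} ∩ C_k ∩ C_ℓ is empty, and consequently the open set U = C_k ∩ C_ℓ satisfies V ⊆ U and U \ V ⊆ Ω_k ∪ Ω_ℓ. -/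
open Set

/-! ### Auxiliary definitions and lemmas -/

/-- Projection of a point of `ℝ^{d+1}` onto its first `d` coordinates. -/
def prHyp {d : ℕ} (x : EuclideanSpace ℝ (Fin (d + 1))) : EuclideanSpace ℝ (Fin d) :=
  WithLp.toLp 2 (fun i => x (Fin.castSucc i))

lemma prHyp_eq {d : ℕ} (x : EuclideanSpace ℝ (Fin (d + 1))) :
    (WithLp.toLp 2 (fun i => x (Fin.castSucc i)) : EuclideanSpace ℝ (Fin d)) = prHyp x := rfl

/-- Replace the last coordinate of a point by `s`. -/
def vupHyp {d : ℕ} (x : EuclideanSpace ℝ (Fin (d + 1))) (s : ℝ) : EuclideanSpace ℝ (Fin (d + 1)) :=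
  WithLp.toLp 2 (Function.update x (Fin.last d) s)

lemma prHyp_vup {d : ℕ} (x : EuclideanSpace ℝ (Fin (d + 1))) (s : ℝ) :
    prHyp (vupHyp x s) = prHyp x := by
  ext i
  simp [prHyp, vupHyp, Function.update_apply, (Fin.castSucc_lt_last i).ne]

lemma vupHyp_last {d : ℕ} (x : EuclideanSpace ℝ (Fin (d + 1))) (s : ℝ) :
    vupHyp x s (Fin.last d) = s := by
  simp [vupHyp]

lemma prHyp_combo {d : ℕ} (a b : ℝ) (x y : EuclideanSpace ℝ (Fin (d + 1))) :
    prHyp (a • x + b • y) = a • prHyp x + b • prHyp y := by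
  ext i
  simp [prHyp]

lemma last_combo {d : ℕ} (a b : ℝ) (x y : EuclideanSpace ℝ (Fin (d + 1))) :
    (a • x + b • y) (Fin.last d) = a * x (Fin.last d) + b * y (Fin.last d) := by
  simp

lemma prHyp_continuous {d : ℕ} : Continuous (prHyp (d := d)) := by
  unfold prHyp
  fun_prop

lemma dist_prHyp_le {d : ℕ} (x y : EuclideanSpace ℝ (Fin (d + 1))) :
    dist (prHyp x) (prHyp y) ≤ dist x y := by
  rw [EuclideanSpace.dist_eq, EuclideanSpace.dist_eq, Fin.sum_univ_castSucc]
  apply Real.sqrt_le_sqrt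
  have : 0 ≤ dist (x (Fin.last d)) (y (Fin.last d)) ^ 2 := sq_nonneg _
  simp only [prHyp, PiLp.toLp_apply]
  linarith

lemma dist_last_le {d : ℕ} (x y : EuclideanSpace ℝ (Fin (d + 1))) :
    dist (x (Fin.last d)) (y (Fin.last d)) ≤ dist x y := by
  refine le_trans (le_of_eq (Real.sqrt_sq dist_nonneg).symm) ?_
  rw [EuclideanSpace.dist_eq, Fin.sum_univ_castSucc]
  refine Real.sqrt_le_sqrt ?_
  have : (0:ℝ) ≤ ∑ i : Fin d, dist (x i.castSucc) (y i.castSucc) ^ 2 :=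
    Finset.sum_nonneg fun i _ => sq_nonneg _
  linarith

lemma sqrt_add_le' (a b : ℝ) (ha : 0 ≤ a) (hb : 0 ≤ b) :
    Real.sqrt (a + b) ≤ Real.sqrt a + Real.sqrt b := by
  have h1 := Real.sq_sqrt ha
  have h2 := Real.sq_sqrt hb
  have h3 := Real.sqrt_nonneg a
  have h4 := Real.sqrt_nonneg b
  calc Real.sqrt (a+b) ≤ Real.sqrt ((Real.sqrt a + Real.sqrt b)^2) :=
        Real.sqrt_le_sqrt (by nlinarith)
    _ = _ := Real.sqrt_sq (by linarith)

lemma dist_le_prHyp_add_last {d : ℕ} (x y : EuclideanSpace ℝ (Fin (d + 1))) :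
    dist x y ≤ dist (prHyp x) (prHyp y) + dist (x (Fin.last d)) (y (Fin.last d)) := by
  rw [EuclideanSpace.dist_eq, EuclideanSpace.dist_eq, Fin.sum_univ_castSucc]
  calc Real.sqrt ((∑ i : Fin d, dist (x i.castSucc) (y i.castSucc) ^ 2) +
        dist (x (Fin.last d)) (y (Fin.last d))^2)
      ≤ Real.sqrt (∑ i : Fin d, dist (x i.castSucc) (y i.castSucc) ^ 2) +
        Real.sqrt (dist (x (Fin.last d)) (y (Fin.last d))^2) :=
        sqrt_add_le' _ _ (Finset.sum_nonneg fun i _ => sq_nonneg _) (sq_nonneg _)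
    _ = _ := by rw [Real.sqrt_sq dist_nonneg]; rfl

lemma joinedIn_of_segment {d : ℕ} {s : Set (EuclideanSpace ℝ (Fin (d + 1)))}
    {a b : EuclideanSpace ℝ (Fin (d + 1))} (h : segment ℝ a b ⊆ s) : JoinedIn s a b :=
  (((convex_segment a b).isPathConnected ⟨a, left_mem_segment ℝ a b⟩).joinedIn a
    (left_mem_segment ℝ a b) b (right_mem_segment ℝ a b)).mono h

lemma combo_between {a b θ σ : ℝ} (hθ : 0 ≤ θ) (hσ : 0 ≤ σ) (hs : θ + σ = 1) :
    min a b ≤ θ*a + σ*b ∧ θ*a + σ*b ≤ max a b := by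
  have e1 : θ*a + σ*a = a := by rw [← add_mul, hs, one_mul]
  have e2 : θ*b + σ*b = b := by rw [← add_mul, hs, one_mul]
  constructor
  · rcases le_total a b with h | h
    · rw [min_eq_left h]; linarith [mul_nonneg hσ (sub_nonneg.2 h)]
    · rw [min_eq_right h]; linarith [mul_nonneg hθ (sub_nonneg.2 h)]
  · rcases le_total a b with h | h
    · rw [max_eq_right h]; linarith [mul_nonneg hθ (sub_nonneg.2 h)]
    · rw [max_eq_left h]; linarith [mul_nonneg hσ (sub_nonneg.2 h)]

lemma combo_abs_lt {a b c R θ σ : ℝ} (hθ : 0 ≤ θ) (hσ : 0 ≤ σ) (hs : θ + σ = 1)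
    (ha : |a - c| < R) (hb : |b - c| < R) : |θ*a + σ*b - c| < R := by
  obtain ⟨h1, h2⟩ := combo_between (a := a - c) (b := b - c) hθ hσ hs
  have e : θ*(a-c) + σ*(b-c) = θ*a + σ*b - c := by linear_combination (-c) * hs
  rw [abs_lt] at ha hb ⊢
  constructor
  · have h3 := lt_min (show -R < a - c by linarith) (show -R < b - c by linarith)
    linarith
  · have h4 := max_lt (show a - c < R by linarith) (show b - c < R by linarith)
    linarith

set_option maxHeartbeats 2000000

/-- Key geometric step in the proof that triple interfaces are negligible.  Suppose the common
interface `V` of two disjoint open sets `Ω_k, Ω_ℓ` is represented in two cylinders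
`C_i = B_i × (a_i, b_i)` as the graph of Lipschitz functions `g_i` (via `φ_i(w,t) = t − g_i(w)`,
the second chart being rotated by an isometry `J`), with `Ω_k ∩ C_k = {φ_k < 0}`,
`C_k \ closure Ω_k = {φ_k > 0}`, `V = {φ_k = 0}`, and the analogous identities for `ℓ` through
`J`.  Then `{φ_k > 0} ∩ J{φ_ℓ > 0} = ∅`; consequently `U := C_k ∩ J C_ℓ` is an open set with
`V ⊆ U` and `U \ V ⊆ Ω_k ∪ Ω_ℓ`. -/
theorem lipschitz_interface_cylinders
    {d : ℕ}
    (Ωk Ωl : Set (EuclideanSpace ℝ (Fin (d + 1))))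
    (hΩk : IsOpen Ωk) (hΩl : IsOpen Ωl) (hdisj : Disjoint Ωk Ωl)
    (V : Set (EuclideanSpace ℝ (Fin (d + 1)))) (hVne : V.Nonempty)
    (hVsub : V ⊆ frontier Ωk ∩ frontier Ωl)
    (Bk Bl : Set (EuclideanSpace ℝ (Fin d)))
    (ck cl : EuclideanSpace ℝ (Fin d)) (rk rl : ℝ)
    (hBk : Bk = Metric.ball ck rk) (hBl : Bl = Metric.ball cl rl)
    (ak bk al bl : ℝ)
    (Ck Cl : Set (EuclideanSpace ℝ (Fin (d + 1))))
    (hCk : Ck = {x | (WithLp.toLp 2 (fun i => x (Fin.castSucc i))) ∈ Bk ∧ x (Fin.last d) ∈ Ioo ak bk})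
    (hCl : Cl = {x | (WithLp.toLp 2 (fun i => x (Fin.castSucc i))) ∈ Bl ∧ x (Fin.last d) ∈ Ioo al bl})
    (gk gl : EuclideanSpace ℝ (Fin d) → ℝ) (Kk Kl : NNReal)
    (hgk : LipschitzWith Kk gk) (hgl : LipschitzWith Kl gl)
    (J : EuclideanSpace ℝ (Fin (d + 1)) ≃ᵢ EuclideanSpace ℝ (Fin (d + 1)))
    (hk₁ : Ωk ∩ Ck = {x ∈ Ck | x (Fin.last d) < gk (WithLp.toLp 2 (fun i => x (Fin.castSucc i)))})
    (hk₂ : Ck \ closure Ωk = {x ∈ Ck | gk (WithLp.toLp 2 (fun i => x (Fin.castSucc i))) < x (Fin.last d)})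
    (hk₃ : V = {x ∈ Ck | x (Fin.last d) = gk (WithLp.toLp 2 (fun i => x (Fin.castSucc i)))})
    (hl₁ : Ωl ∩ J '' Cl =
      J '' {x ∈ Cl | x (Fin.last d) < gl (WithLp.toLp 2 (fun i => x (Fin.castSucc i)))})
    (hl₂ : (J '' Cl) \ closure Ωl =
      J '' {x ∈ Cl | gl (WithLp.toLp 2 (fun i => x (Fin.castSucc i))) < x (Fin.last d)})
    (hl₃ : V = J '' {x ∈ Cl | x (Fin.last d) = gl (WithLp.toLp 2 (fun i => x (Fin.castSucc i)))}) :
    {x ∈ Ck | gk (WithLp.toLp 2 (fun i => x (Fin.castSucc i))) < x (Fin.last d)} ∩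
        (J '' {x ∈ Cl | gl (WithLp.toLp 2 (fun i => x (Fin.castSucc i))) < x (Fin.last d)}) = ∅ ∧
    V ⊆ Ck ∩ J '' Cl ∧
    (Ck ∩ J '' Cl) \ V ⊆ Ωk ∪ Ωl := by
  clear hk₂ hl₂
  simp only [prHyp_eq] at hk₁ hk₃ hl₁ hl₃ hCk hCl ⊢
  have hJsymm : ∀ z, J.symm (J z) = z := fun z => J.symm_apply_apply z
  have hJJ : ∀ x, J (J.symm x) = x := fun x => J.apply_symm_apply x
  set ψ : EuclideanSpace ℝ (Fin (d + 1)) → ℝ :=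
    fun x => (J.symm x) (Fin.last d) - gl (prHyp (J.symm x)) with hψ
  have hψJ : ∀ z, ψ (J z) = z (Fin.last d) - gl (prHyp z) := by
    intro z; simp only [hψ, hJsymm]
  have hψcont : Continuous ψ := by
    apply Continuous.sub
    · exact (PiLp.continuous_apply _ _ _).comp J.symm.continuous
    · exact hgl.continuous.comp (prHyp_continuous.comp J.symm.continuous)
  have hmemJ : ∀ x ∈ J '' Cl, J.symm x ∈ Cl := by
    rintro x ⟨z, hz, rfl⟩; rwa [hJsymm]
  -- sign characterizations through `ψ` on `J '' Cl`
  have hψneg : ∀ x, x ∈ Ωl → x ∈ J '' Cl → ψ x < 0 := by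
    intro x h1 h2
    have hx : x ∈ Ωl ∩ J '' Cl := ⟨h1, h2⟩
    rw [hl₁] at hx
    obtain ⟨z, ⟨hzCl, hzlt⟩, rfl⟩ := hx
    rw [hψJ]; linarith
  have hψneg' : ∀ x, x ∈ J '' Cl → ψ x < 0 → x ∈ Ωl := by
    intro x h2 h1
    simp only [hψ] at h1
    have : x ∈ J '' {z ∈ Cl | z (Fin.last d) < gl (prHyp z)} :=
      ⟨J.symm x, ⟨hmemJ x h2, by linarith⟩, hJJ x⟩
    rw [← hl₁] at this
    exact this.1
  have hψzeroV : ∀ x, x ∈ J '' Cl → ψ x = 0 → x ∈ V := by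
    intro x h2 h1
    simp only [hψ] at h1
    rw [hl₃]
    exact ⟨J.symm x, ⟨hmemJ x h2, by linarith⟩, hJJ x⟩
  have hVψ : ∀ x ∈ V, ψ x = 0 := by
    intro x hx
    rw [hl₃] at hx
    obtain ⟨z, ⟨hzCl, hzeq⟩, rfl⟩ := hx
    rw [hψJ]; linarith
  have hψpos' : ∀ x, x ∈ J '' Cl → 0 < ψ x →
      x ∈ J '' {z ∈ Cl | gl (prHyp z) < z (Fin.last d)} := by
    intro x h2 h1
    simp only [hψ] at h1
    exact ⟨J.symm x, ⟨hmemJ x h2, by linarith⟩, hJJ x⟩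
  have hψpos : ∀ x, x ∈ J '' {z ∈ Cl | gl (prHyp z) < z (Fin.last d)} → 0 < ψ x := by
    rintro x ⟨z, ⟨hzCl, hzlt⟩, rfl⟩
    rw [hψJ]; linarith
  -- the `k` side
  have hkneg : ∀ x, x ∈ Ck → x (Fin.last d) < gk (prHyp x) → x ∈ Ωk := by
    intro x h1 h2
    have hx : x ∈ {x ∈ Ck | x (Fin.last d) < gk (prHyp x)} := ⟨h1, h2⟩
    rw [← hk₁] at hx
    exact hx.1
  have hkneg' : ∀ x, x ∈ Ωk → x ∈ Ck → x (Fin.last d) < gk (prHyp x) := by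
    intro x h1 h2
    have hx : x ∈ Ωk ∩ Ck := ⟨h1, h2⟩
    rw [hk₁] at hx
    exact hx.2
  have hVk : ∀ x ∈ V, x ∈ Ck ∧ x (Fin.last d) = gk (prHyp x) := by
    intro x hx; rw [hk₃] at hx; exact hx
  have hkV : ∀ x, x ∈ Ck → x (Fin.last d) = gk (prHyp x) → x ∈ V := by
    intro x h1 h2; rw [hk₃]; exact ⟨h1, h2⟩
  have hVJCl : V ⊆ J '' Cl := by
    rw [hl₃]; exact image_mono (f := J) (sep_subset _ _)
  set U : Set (EuclideanSpace ℝ (Fin (d + 1))) := Ck ∩ J '' Cl with hU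
  have hVU : V ⊆ U := fun x hx => ⟨(hVk x hx).1, hVJCl hx⟩
  have hCkOpen : IsOpen Ck := by
    rw [hCk, hBk]
    exact (Metric.isOpen_ball.preimage prHyp_continuous).inter
      (isOpen_Ioo.preimage (PiLp.continuous_apply _ _ _))
  have hClOpen : IsOpen Cl := by
    rw [hCl, hBl]
    exact (Metric.isOpen_ball.preimage prHyp_continuous).inter
      (isOpen_Ioo.preimage (PiLp.continuous_apply _ _ _))
  have hUOpen : IsOpen U := hCkOpen.inter (J.toHomeomorph.isOpenMap _ hClOpen)
  set W : Set (EuclideanSpace ℝ (Fin (d + 1))) :=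
    {x ∈ Ck | gk (prHyp x) < x (Fin.last d)} ∩
      (J '' {x ∈ Cl | gl (prHyp x) < x (Fin.last d)}) with hWdef
  have hWopen : IsOpen W := by
    rw [hWdef]
    refine IsOpen.inter ?_ (J.toHomeomorph.isOpenMap _ ?_)
    · exact hCkOpen.inter (isOpen_lt (hgk.continuous.comp prHyp_continuous) (PiLp.continuous_apply _ _ _))
    · exact hClOpen.inter (isOpen_lt (hgl.continuous.comp prHyp_continuous) (PiLp.continuous_apply _ _ _))
  have hWsub : W ⊆ U := fun x hx => ⟨hx.1.1, image_mono (f := J) (sep_subset _ _) hx.2⟩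
  have hWψ : ∀ x ∈ W, 0 < ψ x := fun x hx => hψpos x hx.2
  -- Local lemma: no point of V is in the closure of W
  have hloc : ∀ p ∈ V, p ∉ closure W := by
    intro p hp hclos
    obtain ⟨hpCk, hpeq⟩ := hVk p hp
    have hpU : p ∈ U := hVU hp
    obtain ⟨δ, hδpos, hδ⟩ := Metric.isOpen_iff.1 hUOpen p hpU
    set K : ℝ := (Kk : ℝ) with hK
    have hK0 : (0:ℝ) ≤ K := Kk.coe_nonneg
    set r : ℝ := δ / (K + 3) with hr
    have hrpos : 0 < r := div_pos hδpos (by linarith)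
    have hrδ : (K + 3) * r = δ := by rw [hr]; field_simp
    set Q : Set (EuclideanSpace ℝ (Fin (d + 1))) :=
      prHyp ⁻¹' Metric.ball (prHyp p) r ∩
        (fun x => x (Fin.last d)) ⁻¹' Metric.ball (p (Fin.last d)) ((K+2)*r) with hQ
    have hlastcont : Continuous (fun x : EuclideanSpace ℝ (Fin (d + 1)) => x (Fin.last d)) :=
      PiLp.continuous_apply _ _ _
    have hQopen : IsOpen Q := (Metric.isOpen_ball.preimage prHyp_continuous).inter
      (Metric.isOpen_ball.preimage hlastcont)
    have hpQ : p ∈ Q := by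
      constructor
      · show prHyp p ∈ Metric.ball (prHyp p) r
        rw [Metric.mem_ball, dist_self]; exact hrpos
      · show p (Fin.last d) ∈ Metric.ball (p (Fin.last d)) ((K+2)*r)
        rw [Metric.mem_ball, dist_self]; exact mul_pos (by linarith) hrpos
    have hQsubU : Q ⊆ U := by
      rintro x ⟨hx1, hx2⟩
      apply hδ
      rw [Metric.mem_ball]
      have h1 : dist (prHyp x) (prHyp p) < r := hx1
      have h2 : dist (x (Fin.last d)) (p (Fin.last d)) < (K+2)*r := hx2
      have h3 := dist_le_prHyp_add_last x p
      linarith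
    have hgkb : ∀ u : EuclideanSpace ℝ (Fin d), dist u (prHyp p) < r →
        |gk u - p (Fin.last d)| ≤ K * r := by
      intro u hu
      have h1 := hgk.dist_le_mul u (prHyp p)
      rw [Real.dist_eq, ← hK] at h1
      have h2 : K * dist u (prHyp p) ≤ K * r :=
        mul_le_mul_of_nonneg_left hu.le hK0
      calc |gk u - p (Fin.last d)| = |gk u - gk (prHyp p)| := by rw [hpeq]
        _ ≤ K * dist u (prHyp p) := h1
        _ ≤ K * r := h2
    set m' : ℝ := p (Fin.last d) + (K+1)*r with hm'
    set q₀ : EuclideanSpace ℝ (Fin (d + 1)) := vupHyp p m' with hq₀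
    set S : Set (EuclideanSpace ℝ (Fin (d + 1))) :=
      {x ∈ Q | gk (prHyp x) < x (Fin.last d)} with hS
    have hSQ : ∀ x ∈ S, x ∈ Q := fun x hx => hx.1
    have hq₀S : q₀ ∈ S := by
      refine ⟨⟨?_, ?_⟩, ?_⟩
      · show prHyp q₀ ∈ Metric.ball (prHyp p) r
        rw [hq₀, prHyp_vup, Metric.mem_ball, dist_self]; exact hrpos
      · show q₀ (Fin.last d) ∈ Metric.ball (p (Fin.last d)) ((K+2)*r)
        rw [hq₀, vupHyp_last, Metric.mem_ball, Real.dist_eq, hm']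
        rw [add_sub_cancel_left, abs_of_nonneg (by nlinarith)]
        nlinarith
      · rw [hq₀, prHyp_vup, vupHyp_last, ← hpeq, hm']
        nlinarith
    -- path-connectedness of S
    have hSpc : IsPathConnected S := by
      refine ⟨q₀, hq₀S, ?_⟩
      intro y hy
      obtain ⟨⟨hy1, hy2⟩, hy3⟩ := hy
      have hy1' : dist (prHyp y) (prHyp p) < r := hy1
      have hy2' : |y (Fin.last d) - p (Fin.last d)| < (K+2)*r := by
        have := hy2; rwa [mem_preimage, Metric.mem_ball, Real.dist_eq] at this
      have hgy := hgkb (prHyp y) hy1'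
      rw [abs_le] at hgy
      rw [abs_lt] at hy2'
      -- first segment: from y straight up/down to level m'
      have hseg1 : segment ℝ y (vupHyp y m') ⊆ S := by
        rintro u ⟨θ, σ, hθ, hσ, hsum, rfl⟩
        have hpr : prHyp (θ • y + σ • vupHyp y m') = prHyp y := by
          rw [prHyp_combo, prHyp_vup, ← add_smul, hsum, one_smul]
        have hlast : (θ • y + σ • vupHyp y m') (Fin.last d) =
            θ * y (Fin.last d) + σ * m' := by
          rw [last_combo, vupHyp_last]
        obtain ⟨hcb1, hcb2⟩ := combo_between (a := y (Fin.last d)) (b := m') hθ hσ hsum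
        have hm'range : |m' - p (Fin.last d)| < (K+2)*r := by
          rw [hm', add_sub_cancel_left, abs_of_nonneg (by nlinarith)]
          nlinarith
        rw [abs_lt] at hm'range
        have hmin : gk (prHyp y) < min (y (Fin.last d)) m' := by
          rw [lt_min_iff]
          refine ⟨hy3, ?_⟩
          rw [hm']; nlinarith
        refine ⟨⟨?_, ?_⟩, ?_⟩
        · show prHyp _ ∈ Metric.ball (prHyp p) r
          rw [hpr]; exact hy1'
        · show (θ • y + σ • vupHyp y m') (Fin.last d) ∈ Metric.ball (p (Fin.last d)) ((K+2)*r)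
          rw [Metric.mem_ball, Real.dist_eq, hlast]
          refine combo_abs_lt hθ hσ hsum ?_ ?_
          · rw [abs_lt]; exact hy2'
          · rw [abs_lt]; exact hm'range
        · show gk (prHyp _) < (θ • y + σ • vupHyp y m') (Fin.last d)
          rw [hpr, hlast]
          exact lt_of_lt_of_le hmin hcb1
      -- second segment: from (pr y, m') horizontally to q₀ = (pr p, m')
      have hseg2 : segment ℝ (vupHyp y m') q₀ ⊆ S := by
        rintro u ⟨θ, σ, hθ, hσ, hsum, rfl⟩
        have hpr : prHyp (θ • vupHyp y m' + σ • q₀) = θ • prHyp y + σ • prHyp p := by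
          rw [prHyp_combo, hq₀, prHyp_vup, prHyp_vup]
        have hlast : (θ • vupHyp y m' + σ • q₀) (Fin.last d) = m' := by
          rw [last_combo, hq₀, vupHyp_last, vupHyp_last, ← add_mul, hsum, one_mul]
        have hball : θ • prHyp y + σ • prHyp p ∈ Metric.ball (prHyp p) r := by
          refine (convex_ball (prHyp p) r) ?_ ?_ hθ hσ hsum
          · exact hy1'
          · rw [Metric.mem_ball, dist_self]; exact hrpos
        have hgu := hgkb _ (by rwa [Metric.mem_ball] at hball)
        rw [abs_le] at hgu
        refine ⟨⟨?_, ?_⟩, ?_⟩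
        · show prHyp _ ∈ Metric.ball (prHyp p) r
          rw [hpr]; exact hball
        · show (θ • vupHyp y m' + σ • q₀) (Fin.last d) ∈ Metric.ball (p (Fin.last d)) ((K+2)*r)
          rw [Metric.mem_ball, Real.dist_eq, hlast, hm', add_sub_cancel_left,
            abs_of_nonneg (by nlinarith)]
          nlinarith
        · show gk (prHyp _) < (θ • vupHyp y m' + σ • q₀) (Fin.last d)
          rw [hpr, hlast, hm']
          have := hgu.2
          nlinarith
      exact ((joinedIn_of_segment hseg1).trans (joinedIn_of_segment hseg2)).symm
    -- get a point of W in Q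
    obtain ⟨x, hxQ, hxW⟩ := mem_closure_iff.1 hclos Q hQopen hpQ
    have hxS : x ∈ S := ⟨hxQ, hxW.1.2⟩
    have hψx : 0 < ψ x := hWψ x hxW
    -- get a point of Ωl in Q
    have hpfr : p ∈ closure Ωl := frontier_subset_closure (hVsub hp).2
    obtain ⟨y, hyQ, hyΩl⟩ := mem_closure_iff.1 hpfr Q hQopen hpQ
    have hyU : y ∈ U := hQsubU hyQ
    have hψy : ψ y < 0 := hψneg y hyΩl hyU.2
    rcases lt_trichotomy (y (Fin.last d)) (gk (prHyp y)) with hlt | heq | hgt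
    · exact Set.disjoint_left.1 hdisj (hkneg y hyU.1 hlt) hyΩl
    · have : y ∈ V := hkV y hyU.1 heq
      have := hVψ y this
      linarith
    · have hyS : y ∈ S := ⟨hyQ, hgt⟩
      have h0 : (0:ℝ) ∈ Icc (ψ y) (ψ x) := ⟨hψy.le, hψx.le⟩
      obtain ⟨c, hcS, hc0⟩ :=
        hSpc.isConnected.isPreconnected.intermediate_value hyS hxS hψcont.continuousOn h0
      have hcV : c ∈ V := hψzeroV c (hQsubU (hSQ c hcS)).2 hc0
      have := (hVk c hcV).2
      have := hcS.2
      linarith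
  -- Global step : W = ∅
  have hWempty : W = ∅ := by
    by_contra h
    obtain ⟨x0, hx0⟩ := nonempty_iff_ne_empty.2 h
    obtain ⟨v, hv⟩ := hVne
    have hCkconv : Convex ℝ Ck := by
      rw [hCk, hBk]
      intro x hx y hy θ σ hθ hσ hs
      constructor
      · show prHyp (θ • x + σ • y) ∈ Metric.ball ck rk
        rw [prHyp_combo]
        exact (convex_ball ck rk) hx.1 hy.1 hθ hσ hs
      · show (θ • x + σ • y) (Fin.last d) ∈ Ioo ak bk
        rw [last_combo]
        have := (convex_Ioo ak bk) hx.2 hy.2 hθ hσ hs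
        simpa using this
    have hClconv : Convex ℝ Cl := by
      rw [hCl, hBl]
      intro x hx y hy θ σ hθ hσ hs
      constructor
      · show prHyp (θ • x + σ • y) ∈ Metric.ball cl rl
        rw [prHyp_combo]
        exact (convex_ball cl rl) hx.1 hy.1 hθ hσ hs
      · show (θ • x + σ • y) (Fin.last d) ∈ Ioo al bl
        rw [last_combo]
        have := (convex_Ioo al bl) hx.2 hy.2 hθ hσ hs
        simpa using this
    have hJClconv : Convex ℝ (J '' Cl) := by
      have := hClconv.affine_image (J.toRealAffineIsometryEquiv.toAffineMap)
      simpa using this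
    have hUconv : Convex ℝ U := hCkconv.inter hJClconv
    set O : Set (EuclideanSpace ℝ (Fin (d + 1))) := (Ωk ∪ Ωl) ∪ (closure W)ᶜ with hO
    have hOopen : IsOpen O := (hΩk.union hΩl).union isClosed_closure.isOpen_compl
    have hcover : U ⊆ O ∪ W := by
      intro x hxU
      rcases lt_trichotomy (x (Fin.last d)) (gk (prHyp x)) with hlt | heq | hgt
      · exact Or.inl (Or.inl (Or.inl (hkneg x hxU.1 hlt)))
      · exact Or.inl (Or.inr (hloc x (hkV x hxU.1 heq)))
      · rcases lt_trichotomy (ψ x) 0 with hψlt | hψeq | hψgt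
        · exact Or.inl (Or.inl (Or.inr (hψneg' x hxU.2 hψlt)))
        · exact Or.inl (Or.inr (hloc x (hψzeroV x hxU.2 hψeq)))
        · exact Or.inr ⟨⟨hxU.1, hgt⟩, hψpos' x hxU.2 hψgt⟩
    have h1 : (U ∩ O).Nonempty := ⟨v, hVU hv, Or.inr (hloc v hv)⟩
    have h2 : (U ∩ W).Nonempty := ⟨x0, hWsub hx0, hx0⟩
    obtain ⟨z, hzU, hzO, hzW⟩ := hUconv.isPreconnected O W hOopen hWopen hcover h1 h2
    rcases hzO with (hzk | hzl) | hzc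
    · have := hkneg' z hzk hzW.1.1
      have := hzW.1.2
      linarith
    · have := hψneg z hzl (hWsub hzW).2
      have := hWψ z hzW
      linarith
    · exact hzc (subset_closure hzW)
  refine ⟨hWempty, fun x hx => hVU hx, ?_⟩
  rintro x ⟨hxU, hxV⟩
  rcases lt_trichotomy (x (Fin.last d)) (gk (prHyp x)) with hlt | heq | hgt
  · exact Or.inl (hkneg x hxU.1 hlt)
  · exact absurd (hkV x hxU.1 heq) hxV
  · rcases lt_trichotomy (ψ x) 0 with hψlt | hψeq | hψgt
    · exact Or.inr (hψneg' x hxU.2 hψlt)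
    · exact absurd (hψzeroV x hxU.2 hψeq) hxV
    · have hxW : x ∈ W := ⟨⟨hxU.1, hgt⟩, hψpos' x hxU.2 hψgt⟩
      rw [hWempty] at hxW
      exact absurd hxW (notMem_empty x)
end
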